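/- Let G be a GP4-graph constructed from a connected graph H with n vertices. If H has a paired dominating set of cardinality at most k (with k ≤ n), then G has a paired dominating set of cardinality at most 2n + k. -/
import Mathlib


open SimpleGraph Finset

/-- `D` is a dominating set of `G`. -/
def Dominating {V : Type*} (G : SimpleGraph V) (D : Finset V) : Prop :=
  ∀ v : V, ∃ u ∈ D, u = v ∨ G.Adj u v

/-- `D` is a semipaired dominating set of `G`: a dominating set whose vertices can be
partitioned into pairs (via a fixed-point-free involution) at distance at most 2. -/
def SemiPairedDom {V : Type*} (G : SimpleGraph V) (D : Finset V) : Prop :=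
  Dominating G D ∧ ∃ f : V → V,
    (∀ u ∈ D, f u ∈ D) ∧ (∀ u ∈ D, f (f u) = u) ∧ (∀ u ∈ D, f u ≠ u) ∧
    (∀ u ∈ D, G.Adj u (f u) ∨ ∃ w, G.Adj u w ∧ G.Adj w (f u))

/-- `D` is a paired dominating set of `G`: a dominating set whose induced subgraph has a
perfect matching (encoded by a fixed-point-free involution pairing adjacent vertices). -/
def PairedDom {V : Type*} (G : SimpleGraph V) (D : Finset V) : Prop :=
  Dominating G D ∧ ∃ f : V → V,
    (∀ u ∈ D, f u ∈ D) ∧ (∀ u ∈ D, f (f u) = u) ∧ (∀ u ∈ D, f u ≠ u) ∧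
    (∀ u ∈ D, G.Adj u (f u))

/-- The domination number. -/
noncomputable def domNum (V : Type*) [Fintype V] (G : SimpleGraph V) : ℕ :=
  sInf {k : ℕ | ∃ D : Finset V, Dominating G D ∧ D.card = k}

/-- The semipaired domination number. -/
noncomputable def semiPairedDomNum (V : Type*) [Fintype V] (G : SimpleGraph V) : ℕ :=
  sInf {k : ℕ | ∃ D : Finset V, SemiPairedDom G D ∧ D.card = k}

/-- The paired domination number. -/
noncomputable def pairedDomNum (V : Type*) [Fintype V] (G : SimpleGraph V) : ℕ :=
  sInf {k : ℕ | ∃ D : Finset V, PairedDom G D ∧ D.card = k}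

/-- The GP4-graph obtained from `H` by attaching to each vertex `a` a path
`a – w_a – x_a – y_a – z_a`, where `w_a, x_a, y_a, z_a` are the vertices
`Sum.inr (a, 0), …, Sum.inr (a, 3)`. -/
def GP4 {α : Type*} (H : SimpleGraph α) : SimpleGraph (α ⊕ α × Fin 4) :=
  SimpleGraph.fromRel (fun u v =>
    (∃ a b, u = Sum.inl a ∧ v = Sum.inl b ∧ H.Adj a b) ∨
    (∃ a, u = Sum.inl a ∧ v = Sum.inr (a, 0)) ∨
    (∃ (a : α) (j k : Fin 4), u = Sum.inr (a, j) ∧ v = Sum.inr (a, k) ∧ (k : ℕ) = (j : ℕ) + 1))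

/-- If `H` (connected, no isolated vertices, `n` vertices) has a paired
dominating set of size at most `k ≤ n`, then its GP4-graph has a paired dominating set
of size at most `2n + k`. -/
theorem gp4_pairedDom_of_pairedDom {α : Type*} [Fintype α] [DecidableEq α]
    (H : SimpleGraph α) (hH : H.Connected) (hiso : ∀ v : α, ∃ u : α, H.Adj u v)
    (k : ℕ) (hk : k ≤ Fintype.card α)
    (h : ∃ D : Finset α, PairedDom H D ∧ D.card ≤ k) :
    ∃ D' : Finset (α ⊕ α × Fin 4),
      PairedDom (GP4 H) D' ∧ D'.card ≤ 2 * Fintype.card α + k := by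
  
  obtain ⟨D, ⟨hdom, f, hf1, hf2, hf3, hf4⟩, hcard⟩ := h
  set D' : Finset (α ⊕ α × Fin 4) :=
    D.image Sum.inl ∪ (Finset.univ.image fun a => Sum.inr (a, 1)) ∪
      (Finset.univ.image fun a => Sum.inr (a, 2)) with hD'
  have hmem1 : ∀ a : α, Sum.inr (a, (1:Fin 4)) ∈ D' := by
    intro a; simp [hD']
  have hmem2 : ∀ a : α, Sum.inr (a, (2:Fin 4)) ∈ D' := by
    intro a; simp [hD']
  have hmemL : ∀ a ∈ D, (Sum.inl a : α ⊕ α × Fin 4) ∈ D' := by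
    intro a ha; simp [hD']; tauto
  have hadj12 : ∀ a : α, (GP4 H).Adj (Sum.inr (a, 1)) (Sum.inr (a, 2)) := by
    intro a
    constructor
    · simp
    · left; right; right; exact ⟨a, 1, 2, rfl, rfl, rfl⟩
  refine ⟨D', ⟨?_, ?_⟩, ?_⟩
  · -- domination
    rintro (a | ⟨a, j⟩)
    · obtain ⟨u, hu, hua⟩ := hdom a
      refine ⟨Sum.inl u, hmemL u hu, ?_⟩
      rcases hua with h | h
      · left; rw [h]
      · right
        constructor
        · simp [h.ne]
        · left; left; exact ⟨u, a, rfl, rfl, h⟩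
    · fin_cases j
      · refine ⟨Sum.inr (a, 1), hmem1 a, Or.inr ?_⟩
        constructor
        · simp
        · right; right; right; exact ⟨a, 0, 1, rfl, rfl, rfl⟩
      · exact ⟨Sum.inr (a, 1), hmem1 a, Or.inl rfl⟩
      · exact ⟨Sum.inr (a, 2), hmem2 a, Or.inl rfl⟩
      · refine ⟨Sum.inr (a, 2), hmem2 a, Or.inr ?_⟩
        constructor
        · simp
        · left; right; right; exact ⟨a, 2, 3, rfl, rfl, rfl⟩
  · -- matching
    refine ⟨fun v => match v with
      | Sum.inl a => Sum.inl (f a)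
      | Sum.inr (a, j) => Sum.inr (a, if j = 1 then 2 else if j = 2 then 1 else j),
      ?_, ?_, ?_, ?_⟩
    all_goals
      intro u hu
      have hu' : (∃ a ∈ D, u = Sum.inl a) ∨ (∃ a, u = Sum.inr (a, 1)) ∨
          (∃ a, u = Sum.inr (a, 2)) := by
        simp only [hD', Finset.mem_union, Finset.mem_image, Finset.mem_univ, true_and] at hu
        rcases hu with (⟨a, ha, rfl⟩ | ⟨a, rfl⟩) | ⟨a, rfl⟩
        · exact Or.inl ⟨a, ha, rfl⟩
        · exact Or.inr (Or.inl ⟨a, rfl⟩)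
        · exact Or.inr (Or.inr ⟨a, rfl⟩)
      rcases hu' with ⟨a, ha, rfl⟩ | ⟨a, rfl⟩ | ⟨a, rfl⟩
    · exact hmemL _ (hf1 a ha)
    · simpa using hmem2 a
    · simpa using hmem1 a
    · simp [hf2 a ha]
    · simp
    · simp
    · simp [hf3 a ha]
    · simp
    · simp
    · -- adjacency inl
      simp only
      constructor
      · simp only [ne_eq, Sum.inl.injEq]
        exact fun hh => hf3 a ha hh.symm
      · left; left; exact ⟨a, f a, rfl, rfl, hf4 a ha⟩
    · simpa using hadj12 a
    · simpa using (hadj12 a).symm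
  · -- cardinality
    have h1 : D' ⊆ D.image Sum.inl ∪ ((Finset.univ.image fun a => Sum.inr (a, 1)) ∪
        (Finset.univ.image fun a => Sum.inr (a, 2))) := by
      rw [hD']; intro x hx
      simp only [Finset.mem_union] at hx ⊢; tauto
    calc D'.card ≤ _ := Finset.card_le_card h1
      _ ≤ (D.image Sum.inl).card + ((Finset.univ.image fun a : α => Sum.inr (a, (1:Fin 4))).card
            + (Finset.univ.image fun a : α => Sum.inr (a, (2:Fin 4))).card) :=
          le_trans (Finset.card_union_le _ _) (by gcongr; exact Finset.card_union_le _ _)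
      _ ≤ k + (Fintype.card α + Fintype.card α) := by
          gcongr
          · exact le_trans (Finset.card_image_le) hcard
          · exact le_trans (Finset.card_image_le) (by simp)
          · exact le_trans (Finset.card_image_le) (by simp)
      _ ≤ 2 * Fintype.card α + k := by omega
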